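/- Let n, t ∈ ℕ with 8 ≤ t < n and t divisible by 8. Every deterministic algorithm 𝒜 that solves weak consensus in the omission model (among n processes, tolerating up to t omission-faulty processes) has message complexity at least t²/32. -/

import Mathlib

/-- A message: a sender, a (distinct) receiver and a round number. -/
structure Message (n : ℕ) where
  sender : Fin n
  receiver : Fin n
  round : ℕ
  ne : sender ≠ receiver

/-- A valid set of messages received by a process in state `s`:
every message has the right receiver and round, and there is
at most one message per sender. -/
def ValidRecv {n : ℕ} {St : Type} (proc : St → Fin n) (rnd : St → ℕ)
    (s : St) (M : Set (Message n)) : Prop :=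
  (∀ m ∈ M, m.receiver = proc s ∧ m.round = rnd s) ∧
  (∀ m ∈ M, ∀ m' ∈ M, m.sender = m'.sender → m = m')

/-- A deterministic algorithm in the synchronous (omission) model:
a type of local states recording a process, a round, a proposal and a
decision, initial states and initial messages for every proposal, and a
deterministic transition function. -/
structure Algorithm (n : ℕ) (Vi Vo : Type) where
  St : Type
  proc : St → Fin n
  rnd : St → ℕ
  prop : St → Vi
  dec : St → Option Vo
  init : Fin n → Vi → St
  initMsgs : Fin n → Vi → Set (Message n)
  trans : St → Set (Message n) → St × Set (Message n)
  init_proc : ∀ i v, proc (init i v) = i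
  init_rnd : ∀ i v, rnd (init i v) = 1
  init_prop : ∀ i v, prop (init i v) = v
  init_dec : ∀ i v, dec (init i v) = none
  initMsgs_sender : ∀ i v, ∀ m ∈ initMsgs i v, m.sender = i
  initMsgs_round : ∀ i v, ∀ m ∈ initMsgs i v, m.round = 1
  initMsgs_uniq : ∀ i v, ∀ m ∈ initMsgs i v, ∀ m' ∈ initMsgs i v,
    m.receiver = m'.receiver → m = m'
  trans_ok : ∀ s M, ValidRecv proc rnd s M →
    proc (trans s M).1 = proc s ∧
    rnd (trans s M).1 = rnd s + 1 ∧
    prop (trans s M).1 = prop s ∧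
    (dec s ≠ none → dec (trans s M).1 = dec s) ∧
    (∀ m ∈ (trans s M).2, m.sender = proc s ∧ m.round = rnd s + 1) ∧
    (∀ m ∈ (trans s M).2, ∀ m' ∈ (trans s M).2, m.receiver = m'.receiver → m = m')

/-- The data of an execution of algorithm `A`: the set of faulty
processes and, for every process and round, a state and the four sets of
sent, send-omitted, received and receive-omitted messages. -/
structure Exec {n : ℕ} {Vi Vo : Type} (A : Algorithm n Vi Vo) where
  faulty : Set (Fin n)
  st : Fin n → ℕ → A.St
  sent : Fin n → ℕ → Set (Message n)
  sendOmit : Fin n → ℕ → Set (Message n)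
  recvd : Fin n → ℕ → Set (Message n)
  recvOmit : Fin n → ℕ → Set (Message n)

/-- `j` is one of the rounds `1, …, k` (where `k ∈ ℕ ∪ {∞}`). -/
def InHorizon (k : ℕ∞) (j : ℕ) : Prop := 1 ≤ j ∧ (j : ℕ∞) ≤ k

/-- `E` is a `k`-round execution of `A` with at most `t` faulty processes. -/
def IsExec {n : ℕ} {Vi Vo : Type} (t : ℕ) (A : Algorithm n Vi Vo) (k : ℕ∞)
    (E : Exec A) : Prop :=
  -- at most `t` faulty processes
  E.faulty.encard ≤ (t : ℕ∞) ∧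
  -- every process starts in one of its initial states, with
  -- sent ∪ send-omitted equal to its prescribed initial send set
  ((1 : ℕ∞) ≤ k → ∀ i, ∃ v, E.st i 1 = A.init i v ∧
      E.sent i 1 ∪ E.sendOmit i 1 = A.initMsgs i v) ∧
  -- later states and sent ∪ send-omitted sets are obtained by the transition function
  (∀ i j, 1 ≤ j → ((j + 1 : ℕ) : ℕ∞) ≤ k →
      A.trans (E.st i j) (E.recvd i j)
        = (E.st i (j + 1), E.sent i (j + 1) ∪ E.sendOmit i (j + 1))) ∧
  -- per-round well-formedness (fragments)
  (∀ i j, InHorizon k j →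
      A.proc (E.st i j) = i ∧ A.rnd (E.st i j) = j ∧
      (∀ m ∈ E.sent i j ∪ E.sendOmit i j, m.sender = i ∧ m.round = j) ∧
      (∀ m ∈ E.recvd i j ∪ E.recvOmit i j, m.receiver = i ∧ m.round = j) ∧
      E.sent i j ∩ E.sendOmit i j = ∅ ∧
      E.recvd i j ∩ E.recvOmit i j = ∅ ∧
      (∀ m ∈ E.sent i j ∪ E.sendOmit i j, ∀ m' ∈ E.sent i j ∪ E.sendOmit i j,
        m.receiver = m'.receiver → m = m') ∧
      (∀ m ∈ E.recvd i j ∪ E.recvOmit i j, ∀ m' ∈ E.recvd i j ∪ E.recvOmit i j,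
        m.sender = m'.sender → m = m')) ∧
  -- send-validity
  (∀ i j, InHorizon k j → ∀ m ∈ E.sent i j,
      m ∈ E.recvd m.receiver j ∪ E.recvOmit m.receiver j) ∧
  -- receive-validity
  (∀ i j, InHorizon k j → ∀ m ∈ E.recvd i j ∪ E.recvOmit i j, m ∈ E.sent m.sender j) ∧
  -- omission-validity
  (∀ i, (∃ j, InHorizon k j ∧ (E.sendOmit i j ≠ ∅ ∨ E.recvOmit i j ≠ ∅)) → i ∈ E.faulty)

/-- Process `i` proposes `v` in `E`. -/
def Proposes {n : ℕ} {Vi Vo : Type} {A : Algorithm n Vi Vo}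
    (E : Exec A) (i : Fin n) (v : Vi) : Prop :=
  A.prop (E.st i 1) = v

/-- Process `i` decides `v` in the `k`-round execution `E`. -/
def Decides {n : ℕ} {Vi Vo : Type} {A : Algorithm n Vi Vo}
    (k : ℕ∞) (E : Exec A) (i : Fin n) (v : Vo) : Prop :=
  ∃ j, InHorizon k j ∧ A.dec (E.st i j) = some v

/-- The number of messages sent (not send-omitted) by correct processes in `E`. -/
noncomputable def msgCount {n : ℕ} {Vi Vo : Type} {A : Algorithm n Vi Vo}
    (E : Exec A) : ℕ∞ :=
  {m : Message n | ∃ i, i ∉ E.faulty ∧ ∃ j, 1 ≤ j ∧ m ∈ E.sent i j}.encard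

/-- The message complexity of `A`: the supremum, over all infinite
executions of `A` (with at most `t` faulty processes), of the number of
messages sent by correct processes. -/
noncomputable def MsgComplexity {n : ℕ} {Vi Vo : Type} (t : ℕ)
    (A : Algorithm n Vi Vo) : ℕ∞ :=
  ⨆ E : {E : Exec A // IsExec t A ⊤ E}, msgCount E.1

/-- Two `k`-round executions are indistinguishable to process `i`: it has the
same proposal and receives exactly the same messages in every round of both. -/
def Indist {n : ℕ} {Vi Vo : Type} {A : Algorithm n Vi Vo}
    (k : ℕ∞) (E E' : Exec A) (i : Fin n) : Prop :=
  A.prop (E.st i 1) = A.prop (E'.st i 1) ∧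
  ∀ j, InHorizon k j → E.recvd i j = E'.recvd i j

/-- Group `G ⊊ Π` of at most `t` processes is isolated from round `k` in the
infinite execution `E`: every process of `G` is faulty, send-omits no message,
and receive-omits exactly those messages sent to it in rounds `≥ k` by
processes outside `G`. -/
def IsolatedFrom {n : ℕ} {Vi Vo : Type} {A : Algorithm n Vi Vo}
    (t : ℕ) (E : Exec A) (G : Set (Fin n)) (k : ℕ) : Prop :=
  G ≠ Set.univ ∧ G.encard ≤ (t : ℕ∞) ∧
  ∀ g ∈ G, g ∈ E.faulty ∧
    (∀ j, 1 ≤ j → E.sendOmit g j = ∅) ∧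
    (∀ j, 1 ≤ j → E.recvOmit g j
      = {m | m.receiver = g ∧ m.sender ∉ G ∧ k ≤ j ∧ m ∈ E.sent m.sender j})

/-- `A` solves (binary) weak consensus in the omission model, tolerating `t`
omission-faulty processes: every infinite execution satisfies Termination,
Agreement and Weak Validity. -/
def SolvesWeakConsensus {n : ℕ} (t : ℕ) (A : Algorithm n Bool Bool) : Prop :=
  ∀ E : Exec A, IsExec t A ⊤ E →
    -- Termination
    (∀ i, i ∉ E.faulty → ∃ b, Decides ⊤ E i b) ∧
    -- Agreement
    (∀ i i' b b', i ∉ E.faulty → i' ∉ E.faulty →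
      Decides ⊤ E i b → Decides ⊤ E i' b' → b = b') ∧
    -- Weak Validity
    (E.faulty = ∅ → ∀ b : Bool, (∀ i, Proposes E i b) → ∀ i, ¬ Decides ⊤ E i (!b))


/-! ### Auxiliary development for the lower bound -/

namespace WCLB

open Classical

variable {n : ℕ} (A : Algorithm n Bool Bool)

/-- The canonical run of `A` with proposals `v`, where messages in `Mu` are
send-omitted and messages in `Bl` are receive-omitted.  `runS v Mu Bl j i`
is the round-`(j+1)` state of process `i` together with the full set of
messages it is prescribed to send in round `j+1`. -/
def runS (v : Fin n → Bool) (Mu Bl : Set (Message n)) : ℕ → Fin n → A.St × Set (Message n)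
  | 0 => fun i => (A.init i (v i), A.initMsgs i (v i))
  | j + 1 => fun i =>
      A.trans (runS v Mu Bl j i).1
        {m | m.receiver = i ∧ m ∈ (runS v Mu Bl j m.sender).2 ∧ m ∉ Mu ∧ m ∉ Bl}

/-- Messages received by `i` in round `j+1` of the canonical run. -/
def recvS (v : Fin n → Bool) (Mu Bl : Set (Message n)) (j : ℕ) (i : Fin n) :
    Set (Message n) :=
  {m | m.receiver = i ∧ m ∈ (runS A v Mu Bl j m.sender).2 ∧ m ∉ Mu ∧ m ∉ Bl}

lemma runS_succ (v : Fin n → Bool) (Mu Bl : Set (Message n)) (j : ℕ) (i : Fin n) :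
    runS A v Mu Bl (j + 1) i = A.trans (runS A v Mu Bl j i).1 (recvS A v Mu Bl j i) := rfl

lemma runS_inv (v : Fin n → Bool) (Mu Bl : Set (Message n)) :
    ∀ j i, A.proc (runS A v Mu Bl j i).1 = i ∧
      A.rnd (runS A v Mu Bl j i).1 = j + 1 ∧
      (∀ m ∈ (runS A v Mu Bl j i).2, m.sender = i ∧ m.round = j + 1) ∧
      (∀ m ∈ (runS A v Mu Bl j i).2, ∀ m' ∈ (runS A v Mu Bl j i).2,
        m.receiver = m'.receiver → m = m') := by
  intro j
  induction j with
  | zero =>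
      intro i
      refine ⟨A.init_proc i (v i), A.init_rnd i (v i), ?_, ?_⟩
      · intro m hm
        exact ⟨A.initMsgs_sender i (v i) m hm, A.initMsgs_round i (v i) m hm⟩
      · intro m hm m' hm' h
        exact A.initMsgs_uniq i (v i) m hm m' hm' h
  | succ j ih =>
      intro i
      have hVR : ValidRecv A.proc A.rnd (runS A v Mu Bl j i).1 (recvS A v Mu Bl j i) := by
        constructor
        · intro m hm
          obtain ⟨h1, h2, -⟩ := hm
          refine ⟨by rw [h1, (ih i).1], ?_⟩
          rw [((ih m.sender).2.2.1 m h2).2, (ih i).2.1]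
        · intro m hm m' hm' hs
          obtain ⟨h1, h2, -⟩ := hm
          obtain ⟨h1', h2', -⟩ := hm'
          have := (ih m.sender).2.2.2 m h2 m' (by rw [hs]; exact h2') (by rw [h1, h1'])
          exact this
      have htr := A.trans_ok (runS A v Mu Bl j i).1 (recvS A v Mu Bl j i) hVR
      rw [runS_succ]
      refine ⟨?_, ?_, ?_, ?_⟩
      · rw [htr.1, (ih i).1]
      · rw [htr.2.1, (ih i).2.1]
      · intro m hm
        refine ⟨?_, ?_⟩
        · rw [(htr.2.2.2.2.1 m hm).1, (ih i).1]
        · rw [(htr.2.2.2.2.1 m hm).2, (ih i).2.1]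
      · exact htr.2.2.2.2.2

lemma validRecv_recvS (v : Fin n → Bool) (Mu Bl : Set (Message n)) (j : ℕ) (i : Fin n) :
    ValidRecv A.proc A.rnd (runS A v Mu Bl j i).1 (recvS A v Mu Bl j i) := by
  constructor
  · intro m hm
    obtain ⟨h1, h2, -⟩ := hm
    refine ⟨by rw [h1, (runS_inv A v Mu Bl j i).1], ?_⟩
    rw [((runS_inv A v Mu Bl j m.sender).2.2.1 m h2).2, (runS_inv A v Mu Bl j i).2.1]
  · intro m hm m' hm' hs
    obtain ⟨h1, h2, -⟩ := hm
    obtain ⟨h1', h2', -⟩ := hm'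
    exact (runS_inv A v Mu Bl j m.sender).2.2.2 m h2 m' (by rw [hs]; exact h2')
      (by rw [h1, h1'])

/-- The execution determined by the canonical run, with declared faulty set `F`. -/
def runE (F : Set (Fin n)) (v : Fin n → Bool) (Mu Bl : Set (Message n)) : Exec A where
  faulty := F
  st i j := (runS A v Mu Bl (j - 1) i).1
  sent i j := {m | m ∈ (runS A v Mu Bl (j - 1) i).2 ∧ m ∉ Mu}
  sendOmit i j := {m | m ∈ (runS A v Mu Bl (j - 1) i).2 ∧ m ∈ Mu}
  recvd i j := {m | m.receiver = i ∧ m ∈ (runS A v Mu Bl (j - 1) m.sender).2 ∧ m ∉ Mu ∧ m ∉ Bl}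
  recvOmit i j := {m | m.receiver = i ∧ m ∈ (runS A v Mu Bl (j - 1) m.sender).2 ∧ m ∉ Mu ∧ m ∈ Bl}

@[simp] lemma runE_faulty (F : Set (Fin n)) (v : Fin n → Bool) (Mu Bl : Set (Message n)) :
    (runE A F v Mu Bl).faulty = F := rfl
@[simp] lemma runE_st (F : Set (Fin n)) (v : Fin n → Bool) (Mu Bl : Set (Message n)) (i j) :
    (runE A F v Mu Bl).st i j = (runS A v Mu Bl (j - 1) i).1 := rfl
@[simp] lemma runE_sent (F : Set (Fin n)) (v : Fin n → Bool) (Mu Bl : Set (Message n)) (i j) :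
    (runE A F v Mu Bl).sent i j
      = {m | m ∈ (runS A v Mu Bl (j - 1) i).2 ∧ m ∉ Mu} := rfl
@[simp] lemma runE_sendOmit (F : Set (Fin n)) (v : Fin n → Bool) (Mu Bl : Set (Message n)) (i j) :
    (runE A F v Mu Bl).sendOmit i j
      = {m | m ∈ (runS A v Mu Bl (j - 1) i).2 ∧ m ∈ Mu} := rfl
@[simp] lemma runE_recvd (F : Set (Fin n)) (v : Fin n → Bool) (Mu Bl : Set (Message n)) (i j) :
    (runE A F v Mu Bl).recvd i j
      = {m | m.receiver = i ∧ m ∈ (runS A v Mu Bl (j - 1) m.sender).2 ∧ m ∉ Mu ∧ m ∉ Bl} := rfl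
@[simp] lemma runE_recvOmit (F : Set (Fin n)) (v : Fin n → Bool) (Mu Bl : Set (Message n)) (i j) :
    (runE A F v Mu Bl).recvOmit i j
      = {m | m.receiver = i ∧ m ∈ (runS A v Mu Bl (j - 1) m.sender).2 ∧ m ∉ Mu ∧ m ∈ Bl} := rfl

lemma isExec_runE (t : ℕ) (F : Set (Fin n)) (v : Fin n → Bool) (Mu Bl : Set (Message n))
    (hF : F.encard ≤ (t : ℕ∞))
    (hMu : ∀ j i, ∀ m ∈ (runS A v Mu Bl j i).2, m ∈ Mu → i ∈ F)
    (hBl : ∀ m ∈ Bl, m.receiver ∈ F) :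
    IsExec t A ⊤ (runE A F v Mu Bl) := by
  refine ⟨hF, ?_, ?_, ?_, ?_, ?_, ?_⟩
  · intro _ i
    refine ⟨v i, rfl, ?_⟩
    show {m | m ∈ (runS A v Mu Bl 0 i).2 ∧ m ∉ Mu} ∪ {m | m ∈ (runS A v Mu Bl 0 i).2 ∧ m ∈ Mu}
      = A.initMsgs i (v i)
    have : (runS A v Mu Bl 0 i).2 = A.initMsgs i (v i) := rfl
    rw [← this]
    ext m
    constructor
    · rintro (⟨h, -⟩ | ⟨h, -⟩) <;> exact h
    · intro h
      by_cases hMum : m ∈ Mu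
      · exact Or.inr ⟨h, hMum⟩
      · exact Or.inl ⟨h, hMum⟩
  · intro i j hj _
    have hj1 : j - 1 + 1 = j := Nat.succ_pred_eq_of_pos hj
    have hj2 : j + 1 - 1 = j := rfl
    simp only [runE_st, runE_sent, runE_sendOmit, runE_recvd, hj2]
    have : {m : Message n | m.receiver = i ∧ m ∈ (runS A v Mu Bl (j - 1) m.sender).2 ∧
        m ∉ Mu ∧ m ∉ Bl} = recvS A v Mu Bl (j-1) i := rfl
    rw [this, ← runS_succ, hj1]
    have h3 : {m | m ∈ (runS A v Mu Bl j i).2 ∧ m ∉ Mu} ∪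
        {m | m ∈ (runS A v Mu Bl j i).2 ∧ m ∈ Mu} = (runS A v Mu Bl j i).2 := by
      ext m
      constructor
      · rintro (⟨h, -⟩ | ⟨h, -⟩) <;> exact h
      · intro h
        by_cases hMum : m ∈ Mu
        · exact Or.inr ⟨h, hMum⟩
        · exact Or.inl ⟨h, hMum⟩
    rw [h3]
  · intro i j hj
    have hj1 : j - 1 + 1 = j := Nat.succ_pred_eq_of_pos hj.1
    have inv := runS_inv A v Mu Bl (j-1)
    simp only [runE_st, runE_sent, runE_sendOmit, runE_recvd, runE_recvOmit]
    refine ⟨by rw [(inv i).1], by rw [(inv i).2.1, hj1], ?_, ?_, ?_, ?_, ?_, ?_⟩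
    · rintro m (⟨hm, -⟩ | ⟨hm, -⟩) <;>
        exact ⟨((inv i).2.2.1 m hm).1, by rw [((inv i).2.2.1 m hm).2, hj1]⟩
    · rintro m (⟨hr, hm, -⟩ | ⟨hr, hm, -⟩) <;>
        exact ⟨hr, by rw [((inv m.sender).2.2.1 m hm).2, hj1]⟩
    · ext m
      simp only [Set.mem_inter_iff, Set.mem_empty_iff_false, iff_false]
      rintro ⟨⟨-, h1⟩, ⟨-, h2⟩⟩
      exact h1 h2
    · ext m
      simp only [Set.mem_inter_iff, Set.mem_empty_iff_false, iff_false]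
      rintro ⟨⟨-, -, -, h1⟩, ⟨-, -, -, h2⟩⟩
      exact h1 h2
    · rintro m (⟨hm, -⟩ | ⟨hm, -⟩) m' (⟨hm', -⟩ | ⟨hm', -⟩) hrec <;>
        exact (inv i).2.2.2 m hm m' hm' hrec
    · rintro m (⟨hr, hm, -⟩ | ⟨hr, hm, -⟩) m' (⟨hr', hm', -⟩ | ⟨hr', hm', -⟩) hs <;>
        exact (inv m.sender).2.2.2 m hm m' (by rw [hs]; exact hm') (by rw [hr, hr'])
  · intro i j hj m hm
    simp only [runE_sent, runE_recvd, runE_recvOmit] at *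
    obtain ⟨hm1, hm2⟩ := hm
    have hs : m.sender = i := ((runS_inv A v Mu Bl (j-1) i).2.2.1 m hm1).1
    by_cases hBlm : m ∈ Bl
    · exact Or.inr ⟨rfl, by rw [hs]; exact hm1, hm2, hBlm⟩
    · exact Or.inl ⟨rfl, by rw [hs]; exact hm1, hm2, hBlm⟩
  · intro i j hj m hm
    simp only [runE_sent, runE_recvd, runE_recvOmit] at *
    rcases hm with ⟨-, hm, hMum, -⟩ | ⟨-, hm, hMum, -⟩ <;> exact ⟨hm, hMum⟩
  · rintro i ⟨j, hj, (hne | hne)⟩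
    simp only [runE_sendOmit, runE_recvOmit] at hne
    · obtain ⟨m, hm1, hm2⟩ := Set.nonempty_iff_ne_empty.2 hne
      exact hMu (j-1) i m hm1 hm2
    · obtain ⟨m, hm1, hm2, hm3, hm4⟩ := Set.nonempty_iff_ne_empty.2 hne
      have := hBl m hm4
      rwa [hm1] at this

/-- General comparison lemma between two canonical runs: if `I j` is a
(decreasing) family of processes whose round-`(j+1)` data coincides, then
the runs agree on `I`. -/
lemma runS_eq (v v' : Fin n → Bool) (Mu Mu' Bl Bl' : Set (Message n)) (I : ℕ → Set (Fin n))
    (hmono : ∀ j, I (j+1) ⊆ I j)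
    (h0 : ∀ i ∈ I 0, v i = v' i)
    (hin : ∀ j i, i ∈ I (j+1) → ∀ m : Message n, m.receiver = i → m.round = j + 1 →
        m.sender ∈ I j → m ∈ (runS A v Mu Bl j m.sender).2 →
        ((m ∉ Mu ∧ m ∉ Bl) ↔ (m ∉ Mu' ∧ m ∉ Bl')))
    (hout : ∀ j i, i ∈ I (j+1) → ∀ m : Message n, m.receiver = i → m.round = j + 1 →
        m.sender ∉ I j →
        (m ∈ (runS A v Mu Bl j m.sender).2 → (m ∈ Mu ∨ m ∈ Bl)) ∧
        (m ∈ (runS A v' Mu' Bl' j m.sender).2 → (m ∈ Mu' ∨ m ∈ Bl'))) :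
    ∀ j, ∀ i ∈ I j, runS A v Mu Bl j i = runS A v' Mu' Bl' j i := by
  intro j
  induction j with
  | zero =>
      intro i hi
      show (A.init i (v i), A.initMsgs i (v i)) = (A.init i (v' i), A.initMsgs i (v' i))
      rw [h0 i hi]
  | succ j ih =>
      intro i hi
      have hii : i ∈ I j := hmono j hi
      have hrec : recvS A v Mu Bl j i = recvS A v' Mu' Bl' j i := by
        ext m
        simp only [recvS, Set.mem_setOf_eq]
        constructor
        · rintro ⟨h1, h2, h3, h4⟩
          by_cases hs : m.sender ∈ I j
          · have hr : m.round = j + 1 := ((runS_inv A v Mu Bl j m.sender).2.2.1 m h2).2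
            refine ⟨h1, by rw [← ih m.sender hs]; exact h2, ?_⟩
            exact (hin j i hi m h1 hr hs h2).1 ⟨h3, h4⟩
          · have hr : m.round = j + 1 := ((runS_inv A v Mu Bl j m.sender).2.2.1 m h2).2
            rcases (hout j i hi m h1 hr hs).1 h2 with h | h
            · exact absurd h h3
            · exact absurd h h4
        · rintro ⟨h1, h2, h3, h4⟩
          by_cases hs : m.sender ∈ I j
          · have h2' : m ∈ (runS A v Mu Bl j m.sender).2 := by
              rw [ih m.sender hs]; exact h2
            have hr : m.round = j + 1 := ((runS_inv A v Mu Bl j m.sender).2.2.1 m h2').2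
            refine ⟨h1, h2', ?_⟩
            exact (hin j i hi m h1 hr hs h2').2 ⟨h3, h4⟩
          · have hr : m.round = j + 1 := ((runS_inv A v' Mu' Bl' j m.sender).2.2.1 m h2).2
            rcases (hout j i hi m h1 hr hs).2 h2 with h | h
            · exact absurd h h3
            · exact absurd h h4
      rw [runS_succ, runS_succ, ih i hii, hrec]

/-- In a valid execution, the received set of any process in any round is valid. -/
lemma validRecv_of_isExec {t : ℕ} {E : Exec A} (hE : IsExec t A ⊤ E) (i : Fin n) (j : ℕ)
    (hj : 1 ≤ j) : ValidRecv A.proc A.rnd (E.st i j) (E.recvd i j) := by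
  obtain ⟨-, -, -, hwf, -⟩ := hE
  obtain ⟨hp, hr, -, hrm, -, -, -, huniq⟩ := hwf i j ⟨hj, le_top⟩
  constructor
  · intro m hm
    have := hrm m (Or.inl hm)
    rw [hp, hr]
    exact this
  · intro m hm m' hm' hs
    exact huniq m (Or.inl hm) m' (Or.inl hm') hs

/-- Decisions persist. -/
lemma dec_persist {t : ℕ} {E : Exec A} (hE : IsExec t A ⊤ E) (i : Fin n) (j : ℕ) (hj : 1 ≤ j)
    {b : Bool} (h : A.dec (E.st i j) = some b) : ∀ d, A.dec (E.st i (j + d)) = some b := by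
  intro d
  induction d with
  | zero => exact h
  | succ d ih =>
      have htr := hE.2.2.1 i (j + d) (le_trans hj (Nat.le_add_right _ _)) le_top
      have hok := A.trans_ok _ _ (validRecv_of_isExec A hE i (j+d)
        (le_trans hj (Nat.le_add_right _ _)))
      have hd := hok.2.2.2.1 (by rw [ih]; simp)
      have h1 : (A.trans (E.st i (j+d)) (E.recvd i (j+d))).1 = E.st i (j+d+1) := by rw [htr]
      show A.dec (E.st i (j + d + 1)) = some b
      rw [← h1, hd, ih]

/-- A process decides at most one value in a valid execution. -/
lemma decides_unique {t : ℕ} {E : Exec A} (hE : IsExec t A ⊤ E) (i : Fin n) {b b' : Bool}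
    (h : Decides ⊤ E i b) (h' : Decides ⊤ E i b') : b = b' := by
  obtain ⟨j, hj, hd⟩ := h
  obtain ⟨j', hj', hd'⟩ := h'
  rcases le_total j j' with hle | hle
  · have := dec_persist A hE i j hj.1 hd (j' - j)
    rw [Nat.add_sub_cancel' hle, hd'] at this
    exact (Option.some_inj.1 this).symm
  · have := dec_persist A hE i j' hj'.1 hd' (j - j')
    rw [Nat.add_sub_cancel' hle, hd] at this
    exact (Option.some_inj.1 this)

/-- The decision value of process `i` in execution `E` (if any; `false` otherwise). -/
noncomputable def Dval (E : Exec A) (i : Fin n) : Bool :=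
  if Decides ⊤ E i true then true else false

lemma Dval_eq {t : ℕ} {E : Exec A} (hE : IsExec t A ⊤ E) {i : Fin n} {b : Bool}
    (h : Decides ⊤ E i b) : Dval A E i = b := by
  unfold Dval
  split_ifs with hd
  · exact (decides_unique A hE i hd h)
  · cases b
    · rfl
    · exact absurd h hd

lemma decides_congr {E E' : Exec A} {i : Fin n} (h : ∀ j, E.st i j = E'.st i j) {b : Bool} :
    Decides ⊤ E i b ↔ Decides ⊤ E' i b := by
  unfold Decides
  constructor <;> rintro ⟨j, hj, hd⟩ <;> exact ⟨j, hj, by rw [h j] at *; exact hd⟩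

lemma Dval_congr {E E' : Exec A} {i : Fin n} (h : ∀ j, E.st i j = E'.st i j) :
    Dval A E i = Dval A E' i := by
  unfold Dval
  rw [decides_congr A h]

/-- Blocking pattern: the group `G` receives nothing from round `k+1` on, and
additionally the messages in `T` are blocked. -/
def BlockX (G : Finset (Fin n)) (k : ℕ) (T : Set (Message n)) : Set (Message n) :=
  {m | m.receiver ∈ G ∧ k + 1 ≤ m.round} ∪ T

/-- The basic family of executions: proposals `u`, the group `G` is cut off
from round `k+1` on, and additionally the messages of `T` are blocked. -/
def XE (G : Finset (Fin n)) (u : Fin n → Bool) (k : ℕ) (T : Set (Message n)) : Exec A :=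
  runE A (↑G) u ∅ (BlockX G k T)

lemma isExec_XE (t : ℕ) (G : Finset (Fin n)) (u : Fin n → Bool) (k : ℕ)
    (T : Set (Message n)) (hG : (G.card : ℕ∞) ≤ (t : ℕ∞)) (hT : ∀ m ∈ T, m.receiver ∈ G) :
    IsExec t A ⊤ (XE A G u k T) := by
  apply isExec_runE
  · rw [Set.encard_coe_eq_coe_finsetCard]
    exact hG
  · intro j i m _ hm
    exact absurd hm (Set.notMem_empty m)
  · rintro m (⟨h, -⟩ | h)
    · exact h
    · exact hT m h

/-- Messages addressed to `g` from outside `G` in rounds `≥ k` that are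
actually sent in `E`. -/
def Mset (E : Exec A) (G : Finset (Fin n)) (k : ℕ) (g : Fin n) : Set (Message n) :=
  {m | m.receiver = g ∧ m.sender ∉ G ∧ k ≤ m.round ∧ m ∈ E.sent m.sender m.round}

lemma Mset_subset (E : Exec A) (G : Finset (Fin n)) (k : ℕ) (g : Fin n)
    (hfaulty : E.faulty = ↑G)
    (hpos : ∀ m : Message n, m ∈ E.sent m.sender m.round → 1 ≤ m.round) :
    Mset A E G k g ⊆ {m : Message n | ∃ i, i ∉ E.faulty ∧ ∃ j, 1 ≤ j ∧ m ∈ E.sent i j} := by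
  rintro m ⟨-, hs, -, hsent⟩
  exact ⟨m.sender, by rw [hfaulty]; exact_mod_cast hs, m.round, hpos m hsent, hsent⟩

lemma encard_biUnion {α β : Type*} [DecidableEq α] (S : Finset α) (f : α → Set β) :
    (∀ a ∈ S, ∀ b ∈ S, a ≠ b → Disjoint (f a) (f b)) →
    ∑ a ∈ S, (f a).encard = (⋃ a ∈ S, f a).encard := by
  induction S using Finset.induction_on with
  | empty => intro _; simp
  | @insert x s hx ih =>
      intro hdisj
      rw [Finset.sum_insert hx]
      have hU : (⋃ a ∈ insert x s, f a) = f x ∪ ⋃ a ∈ s, f a := by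
        simp [Set.biUnion_insert]
      rw [hU, Set.encard_union_eq, ih]
      · intro a ha b hb hab
        exact hdisj a (Finset.mem_insert_of_mem ha) b (Finset.mem_insert_of_mem hb) hab
      · apply Set.disjoint_iUnion₂_right.2
        intro a ha
        exact hdisj x (Finset.mem_insert_self x s) a (Finset.mem_insert_of_mem ha)
          (fun h => hx (h ▸ ha))

/-- Pigeonhole: some member of `G'` receives few outside messages in both
executions. -/
lemma exists_quiet (aa : ℕ) (ha : 1 ≤ aa) (G G' : Finset (Fin n))
    (hG' : G' ⊆ G) (hG'card : 2 * aa - 1 ≤ G'.card)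
    (E₁ E₂ : Exec A) (k₁ k₂ : ℕ)
    (hf₁ : E₁.faulty = ↑G) (hf₂ : E₂.faulty = ↑G)
    (hpos₁ : ∀ m : Message n, m ∈ E₁.sent m.sender m.round → 1 ≤ m.round)
    (hpos₂ : ∀ m : Message n, m ∈ E₂.sent m.sender m.round → 1 ≤ m.round)
    (hm₁ : msgCount E₁ < ((2 * aa ^ 2 : ℕ) : ℕ∞))
    (hm₂ : msgCount E₂ < ((2 * aa ^ 2 : ℕ) : ℕ∞)) :
    ∃ g ∈ G', (Mset A E₁ G k₁ g).encard ≤ ((4 * aa : ℕ) : ℕ∞) ∧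
      (Mset A E₂ G k₂ g).encard ≤ ((4 * aa : ℕ) : ℕ∞) := by
  by_contra hcon
  push_neg at hcon
  have hbig : ∀ g ∈ G', ((4 * aa + 1 : ℕ) : ℕ∞) ≤
      (Mset A E₁ G k₁ g).encard + (Mset A E₂ G k₂ g).encard := by
    intro g hg
    have hc : ((4 * aa + 1 : ℕ) : ℕ∞) = ((4 * aa : ℕ) : ℕ∞) + 1 := by push_cast; ring
    rcases le_or_gt ((Mset A E₁ G k₁ g).encard) ((4 * aa : ℕ) : ℕ∞) with h | h
    · have h₂ := hcon g hg h
      calc ((4 * aa + 1 : ℕ) : ℕ∞) ≤ (Mset A E₂ G k₂ g).encard := by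
            rw [hc]; exact Order.add_one_le_of_lt h₂
        _ ≤ _ := le_add_self
    · calc ((4 * aa + 1 : ℕ) : ℕ∞) ≤ (Mset A E₁ G k₁ g).encard := by
            rw [hc]; exact Order.add_one_le_of_lt h
        _ ≤ _ := le_self_add
  have hsum : (G'.card : ℕ∞) * ((4 * aa + 1 : ℕ) : ℕ∞) ≤
      ∑ g ∈ G', ((Mset A E₁ G k₁ g).encard + (Mset A E₂ G k₂ g).encard) := by
    have := Finset.card_nsmul_le_sum G'
      (fun g => (Mset A E₁ G k₁ g).encard + (Mset A E₂ G k₂ g).encard)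
      ((4 * aa + 1 : ℕ) : ℕ∞) hbig
    rwa [nsmul_eq_mul] at this
  have hdisj₁ : ∀ a ∈ G', ∀ b ∈ G', a ≠ b → Disjoint (Mset A E₁ G k₁ a) (Mset A E₁ G k₁ b) := by
    intro a _ b _ hab
    rw [Set.disjoint_left]
    rintro m ⟨h1, -⟩ ⟨h2, -⟩
    exact hab (h1 ▸ h2 ▸ rfl)
  have hdisj₂ : ∀ a ∈ G', ∀ b ∈ G', a ≠ b → Disjoint (Mset A E₂ G k₂ a) (Mset A E₂ G k₂ b) := by
    intro a _ b _ hab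
    rw [Set.disjoint_left]
    rintro m ⟨h1, -⟩ ⟨h2, -⟩
    exact hab (h1 ▸ h2 ▸ rfl)
  have hub₁ : ∑ g ∈ G', (Mset A E₁ G k₁ g).encard ≤ msgCount E₁ := by
    rw [encard_biUnion G' _ hdisj₁]
    apply Set.encard_mono
    apply Set.iUnion₂_subset
    intro g _
    exact Mset_subset A E₁ G k₁ g hf₁ hpos₁
  have hub₂ : ∑ g ∈ G', (Mset A E₂ G k₂ g).encard ≤ msgCount E₂ := by
    rw [encard_biUnion G' _ hdisj₂]
    apply Set.encard_mono
    apply Set.iUnion₂_subset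
    intro g _
    exact Mset_subset A E₂ G k₂ g hf₂ hpos₂
  have h₁' := lt_of_le_of_lt hub₁ hm₁
  have h₂' := lt_of_le_of_lt hub₂ hm₂
  have htot : (G'.card : ℕ∞) * ((4 * aa + 1 : ℕ) : ℕ∞) < ((4 * aa ^ 2 : ℕ) : ℕ∞) := by
    calc (G'.card : ℕ∞) * ((4 * aa + 1 : ℕ) : ℕ∞)
        ≤ ∑ g ∈ G', ((Mset A E₁ G k₁ g).encard + (Mset A E₂ G k₂ g).encard) := hsum
      _ = ∑ g ∈ G', (Mset A E₁ G k₁ g).encard + ∑ g ∈ G', (Mset A E₂ G k₂ g).encard :=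
          Finset.sum_add_distrib
      _ < ((2 * aa ^ 2 : ℕ) : ℕ∞) + ((2 * aa ^ 2 : ℕ) : ℕ∞) :=
          WithTop.add_lt_add_of_le_of_lt h₁'.ne_top h₁'.le h₂'
      _ = ((4 * aa ^ 2 : ℕ) : ℕ∞) := by
          rw [← Nat.cast_add]
          congr 1
          ring
  have hcard : ((2 * aa - 1 : ℕ) : ℕ∞) * ((4 * aa + 1 : ℕ) : ℕ∞) < ((4 * aa ^ 2 : ℕ) : ℕ∞) := by
    refine lt_of_le_of_lt ?_ htot
    exact mul_le_mul_left (by exact_mod_cast hG'card) _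
  rw [← Nat.cast_mul, Nat.cast_lt] at hcard
  obtain ⟨c, rfl⟩ : ∃ c, aa = c + 1 := ⟨aa - 1, by omega⟩
  have hre : 2 * (c + 1) - 1 = 2 * c + 1 := by omega
  rw [hre] at hcard
  nlinarith [hcard]

lemma exists_not_mem_of_encard_lt {S : Set (Fin n)} (h : S.encard < ((n : ℕ) : ℕ∞)) :
    ∃ w : Fin n, w ∉ S := by
  by_contra hcon
  push_neg at hcon
  have : S = Set.univ := Set.eq_univ_of_forall hcon
  rw [this, Set.encard_univ] at h
  simp at h

/-- The swap lemma: a quiet member `g` of `G` must "decide" the common outside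
decision value, because it is correct in an indistinguishable execution where
the senders to `g` are faulty instead. -/
lemma swap_core (t aa : ℕ) (hta : t = 8 * aa) (ha : 1 ≤ aa) (htn : t < n)
    (hA : SolvesWeakConsensus t A)
    (G : Finset (Fin n)) (hGcard : G.card = 2 * aa)
    (w₀ : Fin n) (hw₀ : w₀ ∉ G)
    (u : Fin n → Bool) (k : ℕ) (T : Set (Message n))
    (hT : ∀ m ∈ T, m.receiver ∈ G ∧ k ≤ m.round)
    (g : Fin n) (hg : g ∈ G)
    (hM : (Mset A (XE A G u k T) G k g).encard ≤ ((4 * aa : ℕ) : ℕ∞)) :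
    Decides ⊤ (XE A G u k T) g (Dval A (XE A G u k T) w₀) := by
  have hGle : (G.card : ℕ∞) ≤ (t : ℕ∞) := by
    rw [hGcard, hta]
    exact_mod_cast by omega
  have hE : IsExec t A ⊤ (XE A G u k T) :=
    isExec_XE A t G u k T hGle (fun m hm => (hT m hm).1)
  set MuJ : Set (Message n) := {m | m ∈ BlockX G k T ∧ m.receiver = g} with hMuJ
  set BlJ : Set (Message n) := {m | m ∈ BlockX G k T ∧ m.receiver ≠ g} with hBlJ
  -- the swapped run has the same states
  have hrun : ∀ j i, runS A u ∅ (BlockX G k T) j i = runS A u MuJ BlJ j i := by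
    intro j i
    refine runS_eq A u u ∅ MuJ (BlockX G k T) BlJ (fun _ => Set.univ) ?_ ?_ ?_ ?_ j i
      (Set.mem_univ i)
    · intro _ i _; exact Set.mem_univ i
    · intro i _; rfl
    · intro j i _ m _ _ _ _
      constructor
      · rintro ⟨-, h2⟩
        exact ⟨fun hm => h2 hm.1, fun hm => h2 hm.1⟩
      · rintro ⟨h1, h2⟩
        refine ⟨Set.notMem_empty m, fun hB => ?_⟩
        by_cases hr : m.receiver = g
        · exact h1 ⟨hB, hr⟩
        · exact h2 ⟨hB, hr⟩
    · intro j i _ m _ _ hs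
      exact absurd (Set.mem_univ m.sender) hs
  set FJ : Set (Fin n) := (↑(G.erase g) : Set (Fin n)) ∪ Message.sender '' Mset A (XE A G u k T) G k g with hFJ
  have hFJ6 : FJ.encard ≤ ((6 * aa - 1 : ℕ) : ℕ∞) := by
    calc FJ.encard ≤ (↑(G.erase g) : Set (Fin n)).encard
          + (Message.sender '' Mset A (XE A G u k T) G k g).encard := Set.encard_union_le _ _
      _ ≤ ((2 * aa - 1 : ℕ) : ℕ∞) + ((4 * aa : ℕ) : ℕ∞) := by
          apply add_le_add
          · rw [Set.encard_coe_eq_coe_finsetCard, Finset.card_erase_of_mem hg, hGcard]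
          · exact le_trans (Set.encard_image_le _ _) hM
      _ ≤ ((6 * aa - 1 : ℕ) : ℕ∞) := by
          rw [← Nat.cast_add, Nat.cast_le]
          omega
  have hFJcard : FJ.encard ≤ ((t : ℕ) : ℕ∞) := by
    refine le_trans hFJ6 ?_
    rw [Nat.cast_le, hta]
    omega
  have hMu : ∀ j i, ∀ m ∈ (runS A u MuJ BlJ j i).2, m ∈ MuJ → i ∈ FJ := by
    intro j i m hm hMum
    rw [← hrun j i] at hm
    obtain ⟨hB, hrecv⟩ := hMum
    have hsr := (runS_inv A u ∅ (BlockX G k T) j i).2.2.1 m hm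
    by_cases hiG : i ∈ G
    · left
      apply Finset.mem_coe.2
      apply Finset.mem_erase.2
      refine ⟨?_, hiG⟩
      intro hig
      exact m.ne (by rw [hsr.1, hig, ← hrecv])
    · right
      refine ⟨m, ⟨hrecv, by rw [hsr.1]; exact_mod_cast hiG, ?_, ?_⟩, hsr.1⟩
      · rcases hB with ⟨-, hk⟩ | hTm
        · omega
        · exact (hT m hTm).2
      · show m ∈ {m' | m' ∈ (runS A u ∅ (BlockX G k T) (m.round - 1) m.sender).2 ∧ m' ∉ (∅ : Set (Message n))}
        rw [hsr.1, hsr.2]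
        exact ⟨by simpa using hm, Set.notMem_empty m⟩
  have hBl : ∀ m ∈ BlJ, m.receiver ∈ FJ := by
    rintro m ⟨hB, hne⟩
    left
    apply Finset.mem_coe.2
    apply Finset.mem_erase.2
    refine ⟨hne, ?_⟩
    rcases hB with ⟨h, -⟩ | hTm
    · exact h
    · exact (hT m hTm).1
  have hEJ : IsExec t A ⊤ (runE A FJ u MuJ BlJ) := isExec_runE A t FJ u MuJ BlJ hFJcard hMu hBl
  have hstJ : ∀ i j, (runE A FJ u MuJ BlJ).st i j = (XE A G u k T).st i j := by
    intro i j
    show (runS A u MuJ BlJ (j-1) i).1 = (runS A u ∅ (BlockX G k T) (j-1) i).1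
    rw [hrun]
  have hgFJ : g ∉ FJ := by
    rintro (h | ⟨m, hmM, hms⟩)
    · exact Finset.notMem_erase g G (Finset.mem_coe.1 h)
    · exact hmM.2.1 (by rw [hms]; exact_mod_cast hg)
  have hgJfaulty : g ∉ (runE A FJ u MuJ BlJ).faulty := hgFJ
  obtain ⟨bg, hbg⟩ := (hA _ hEJ).1 g hgJfaulty
  -- a common correct witness
  have hwex : ∃ w : Fin n, w ∉ (↑G : Set (Fin n)) ∪ FJ := by
    apply exists_not_mem_of_encard_lt
    calc ((↑G : Set (Fin n)) ∪ FJ).encard ≤ (↑G : Set (Fin n)).encard + FJ.encard :=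
          Set.encard_union_le _ _
      _ ≤ ((2 * aa : ℕ) : ℕ∞) + ((6 * aa - 1 : ℕ) : ℕ∞) := by
          apply add_le_add _ hFJ6
          rw [Set.encard_coe_eq_coe_finsetCard, hGcard]
      _ < ((n : ℕ) : ℕ∞) := by
          rw [← Nat.cast_add, Nat.cast_lt]
          omega
  obtain ⟨w, hw⟩ := hwex
  have hwG : w ∉ (↑G : Set (Fin n)) := fun h => hw (Or.inl h)
  have hwFJ : w ∉ FJ := fun h => hw (Or.inr h)
  have hEfaulty : (XE A G u k T).faulty = (↑G : Set (Fin n)) := rfl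
  obtain ⟨bw, hbw⟩ := (hA _ hE).1 w (by rw [hEfaulty]; exact hwG)
  obtain ⟨b₀, hb₀⟩ := (hA _ hE).1 w₀ (by rw [hEfaulty]; exact fun h => hw₀ (Finset.mem_coe.1 h))
  have hbwb₀ : bw = b₀ :=
    (hA _ hE).2.1 w w₀ bw b₀ (by rw [hEfaulty]; exact hwG)
      (by rw [hEfaulty]; exact fun h => hw₀ (Finset.mem_coe.1 h)) hbw hb₀
  have hbwJ : Decides ⊤ (runE A FJ u MuJ BlJ) w bw :=
    (decides_congr A (hstJ w)).2 hbw
  have hbgbw : bg = bw := (hA _ hEJ).2.1 g w bg bw hgJfaulty hwFJ hbg hbwJ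
  have hDvalw₀ : Dval A (XE A G u k T) w₀ = b₀ := Dval_eq A hE hb₀
  have : Decides ⊤ (XE A G u k T) g bg := (decides_congr A (hstJ g)).1 hbg
  rwa [hbgbw, hbwb₀, ← hDvalw₀] at this

lemma runE_pos (F : Set (Fin n)) (v : Fin n → Bool) (Mu Bl : Set (Message n)) :
    ∀ m : Message n, m ∈ (runE A F v Mu Bl).sent m.sender m.round → 1 ≤ m.round := by
  intro m hm
  have := ((runS_inv A v Mu Bl (m.round - 1) m.sender).2.2.1 m hm.1).2
  omega

/-- Two of the basic executions in which some large part of `G` has identical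
runs induce the same outside decision. -/
lemma D_eq (t aa : ℕ) (hta : t = 8 * aa) (ha : 1 ≤ aa) (htn : t < n)
    (hA : SolvesWeakConsensus t A)
    (H : ∀ E : Exec A, IsExec t A ⊤ E → msgCount E < ((2 * aa ^ 2 : ℕ) : ℕ∞))
    (G : Finset (Fin n)) (hGcard : G.card = 2 * aa)
    (w₀ : Fin n) (hw₀ : w₀ ∉ G)
    (u u' : Fin n → Bool) (k k' : ℕ) (T T' : Set (Message n))
    (hT : ∀ m ∈ T, m.receiver ∈ G ∧ k ≤ m.round)
    (hT' : ∀ m ∈ T', m.receiver ∈ G ∧ k' ≤ m.round)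
    (G' : Finset (Fin n)) (hG'sub : G' ⊆ G) (hG'card : 2 * aa - 1 ≤ G'.card)
    (hstates : ∀ g ∈ G', ∀ j,
      runS A u ∅ (BlockX G k T) j g = runS A u' ∅ (BlockX G k' T') j g) :
    Dval A (XE A G u k T) w₀ = Dval A (XE A G u' k' T') w₀ := by
  have hGle : (G.card : ℕ∞) ≤ (t : ℕ∞) := by
    rw [hGcard, hta]
    exact_mod_cast by omega
  have hE₁ : IsExec t A ⊤ (XE A G u k T) := isExec_XE A t G u k T hGle (fun m hm => (hT m hm).1)
  have hE₂ : IsExec t A ⊤ (XE A G u' k' T') :=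
    isExec_XE A t G u' k' T' hGle (fun m hm => (hT' m hm).1)
  obtain ⟨g, hgG', hM₁, hM₂⟩ := exists_quiet A aa ha G G' hG'sub hG'card
    (XE A G u k T) (XE A G u' k' T') k k' rfl rfl
    (runE_pos A _ _ _ _) (runE_pos A _ _ _ _) (H _ hE₁) (H _ hE₂)
  have hd₁ := swap_core A t aa hta ha htn hA G hGcard w₀ hw₀ u k T hT g (hG'sub hgG') hM₁
  have hd₂ := swap_core A t aa hta ha htn hA G hGcard w₀ hw₀ u' k' T' hT' g (hG'sub hgG') hM₂
  have hst : ∀ j, (XE A G u' k' T').st g j = (XE A G u k T).st g j := by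
    intro j
    show (runS A u' ∅ _ (j-1) g).1 = (runS A u ∅ _ (j-1) g).1
    rw [hstates g hgG']
  have hd₂' : Decides ⊤ (XE A G u k T) g (Dval A (XE A G u' k' T') w₀) :=
    (decides_congr A hst).1 hd₂
  exact decides_unique A hE₁ g hd₁ hd₂'

lemma mem_BlockX {G : Finset (Fin n)} {c : ℕ} {T : Set (Message n)} {m : Message n} :
    m ∈ BlockX G c T ↔ ((m.receiver ∈ G ∧ c + 1 ≤ m.round) ∨ m ∈ T) := Iff.rfl

/-- Blocking one extra round-`(k+1)` message addressed to `h ∈ G` does not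
change the run of any other member `g` of `G`. -/
lemma states_step (G : Finset (Fin n)) (u : Fin n → Bool) (k : ℕ) (T : Set (Message n))
    (hT : ∀ m ∈ T, m.round = k + 1) (mq : Message n) (hmq : mq.round = k + 1)
    (g : Fin n) (hgG : g ∈ G) (hgh : g ≠ mq.receiver) :
    ∀ j, runS A u ∅ (BlockX G (k+1) (insert mq T)) j g
      = runS A u ∅ (BlockX G (k+1) T) j g := by
  intro j
  have key := runS_eq A u u ∅ ∅ (BlockX G (k+1) (insert mq T)) (BlockX G (k+1) T)
    (fun j => {i : Fin n | i = g ∨ j ≤ k}) ?_ ?_ ?_ ?_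
  · exact key j g (Or.inl rfl)
  · intro j i hi
    rcases hi with h | h
    · exact Or.inl h
    · exact Or.inr (by omega)
  · intro i _; rfl
  · intro j i hi m hrecv hround _ _
    have hmne : m ≠ mq := by
      intro he
      rcases hi with hig | hjk
      · exact hgh (by rw [← hig, ← hrecv, he])
      · have hr := hmq
        rw [← he] at hr
        omega
    constructor
    · rintro ⟨-, h2⟩
      refine ⟨Set.notMem_empty m, fun hB => h2 ?_⟩
      rcases (mem_BlockX).1 hB with hb | ht
      · exact Or.inl hb
      · exact Or.inr (Set.mem_insert_iff.2 (Or.inr ht))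
    · rintro ⟨-, h2⟩
      refine ⟨Set.notMem_empty m, fun hB => h2 ?_⟩
      rcases (mem_BlockX).1 hB with hb | ht
      · exact Or.inl hb
      · rcases Set.mem_insert_iff.1 ht with h | h
        · exact absurd h hmne
        · exact Or.inr h
  · intro j i hi m hrecv hround hs
    have hjk : ¬ j ≤ k := fun h => hs (Or.inr h)
    have hig : i = g := by
      rcases hi with h | h
      · exact h
      · exact absurd (by omega : j ≤ k) hjk
    constructor <;> intro _ <;>
      exact Or.inr (Or.inl ⟨by rw [hrecv, hig]; exact hgG, by omega⟩)

/-- Below the cut, a blocked run agrees with the free run. -/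
lemma prefix_eq (G : Finset (Fin n)) (u : Fin n → Bool) (k : ℕ) (T : Set (Message n))
    (hT : ∀ m ∈ T, m.round = k + 1) :
    ∀ j, j ≤ k → ∀ i, runS A u ∅ (BlockX G (k+1) T) j i = runS A u ∅ ∅ j i := by
  have key := runS_eq A u u ∅ ∅ (BlockX G (k+1) T) ∅
    (fun j => {i : Fin n | j ≤ k}) ?_ ?_ ?_ ?_
  · intro j hj i
    exact key j i hj
  · intro j i hi
    show j ≤ k
    have : (j + 1 : ℕ) ≤ k := hi
    omega
  · intro i _; rfl
  · intro j i hi m hrecv hround _ _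
    have hjk : (j + 1 : ℕ) ≤ k := hi
    constructor
    · rintro ⟨-, -⟩
      exact ⟨Set.notMem_empty m, Set.notMem_empty m⟩
    · rintro ⟨-, -⟩
      refine ⟨Set.notMem_empty m, fun hB => ?_⟩
      rcases (mem_BlockX).1 hB with ⟨-, hb⟩ | ht
      · omega
      · have := hT m ht
        omega
  · intro j i hi m hrecv hround hs
    have hjk : (j + 1 : ℕ) ≤ k := hi
    exact absurd (show j ≤ k by omega) hs

/-- The set of round-`(k+1)` messages into `G` actually sent in the
failure-free run. -/
def fullSet (G : Finset (Fin n)) (u : Fin n → Bool) (k : ℕ) : Set (Message n) :=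
  {m : Message n | m.receiver ∈ G ∧ m.round = k + 1 ∧ m ∈ (runS A u ∅ ∅ k m.sender).2}

lemma mem_fullSet {G : Finset (Fin n)} {u : Fin n → Bool} {k : ℕ} {m : Message n} :
    m ∈ fullSet A G u k ↔
      (m.receiver ∈ G ∧ m.round = k + 1 ∧ m ∈ (runS A u ∅ ∅ k m.sender).2) := Iff.rfl

/-- Blocking all the actually-sent round-`(k+1)` messages into `G` on top of the
cut at `k+1` is the same as cutting at `k`. -/
lemma shift_eq (G : Finset (Fin n)) (u : Fin n → Bool) (k : ℕ) :
    ∀ j i, runS A u ∅ (BlockX G (k+1) (fullSet A G u k)) j i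
      = runS A u ∅ (BlockX G k ∅) j i := by
  set full : Set (Message n) := fullSet A G u k with hfull
  have key := runS_eq A u u ∅ ∅ (BlockX G (k+1) full) (BlockX G k ∅)
    (fun _ => Set.univ) ?_ ?_ ?_ ?_
  · intro j i
    exact key j i (Set.mem_univ i)
  · intro _ i _; exact Set.mem_univ i
  · intro i _; rfl
  · intro j i hi m hrecv hround _ hsent
    constructor
    · rintro ⟨-, h2⟩
      refine ⟨Set.notMem_empty m, fun hB => h2 ?_⟩
      rcases (mem_BlockX).1 hB with ⟨hrG, hb⟩ | ht
      · -- round ≥ k+1 : either ≥ k+2 (base) or = k+1 (in full)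
        rcases Nat.lt_or_ge m.round (k + 2) with hlt | hge
        · have hr : m.round = k + 1 := by omega
          refine Or.inr ((mem_fullSet A).2 ⟨hrG, hr, ?_⟩)
          have hj : j = k := by omega
          rw [← hj]
          rwa [prefix_eq A G u k full (fun m hm => ((mem_fullSet A).1 hm).2.1) j (by omega)
            m.sender] at hsent
        · exact Or.inl ⟨hrG, hge⟩
      · exact absurd ht (Set.notMem_empty m)
    · rintro ⟨-, h2⟩
      refine ⟨Set.notMem_empty m, fun hB => h2 ?_⟩
      rcases (mem_BlockX).1 hB with ⟨hrG, hb⟩ | ht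
      · exact Or.inl ⟨hrG, by omega⟩
      · have ht' := (mem_fullSet A).1 ht
        exact Or.inl ⟨ht'.1, by have := ht'.2.1; omega⟩
  · intro j i hi m hrecv hround hs
    exact absurd (Set.mem_univ m.sender) hs

lemma isExec_alpha (t : ℕ) (u : Fin n → Bool) : IsExec t A ⊤ (runE A ∅ u ∅ ∅) := by
  apply isExec_runE
  · rw [Set.encard_empty]
    exact zero_le
  · intro j i m _ h
    exact absurd h (Set.notMem_empty m)
  · intro m h
    exact absurd h (Set.notMem_empty m)

/-- Moving the cut from round `k+1` to round `k` does not change the outside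
decision. -/
lemma D_succ (t aa : ℕ) (hta : t = 8 * aa) (ha : 1 ≤ aa) (htn : t < n)
    (hA : SolvesWeakConsensus t A)
    (H : ∀ E : Exec A, IsExec t A ⊤ E → msgCount E < ((2 * aa ^ 2 : ℕ) : ℕ∞))
    (G : Finset (Fin n)) (hGcard : G.card = 2 * aa)
    (w₀ : Fin n) (hw₀ : w₀ ∉ G)
    (u : Fin n → Bool) (k : ℕ) :
    Dval A (XE A G u (k+1) (∅ : Set (Message n))) w₀
      = Dval A (XE A G u k (∅ : Set (Message n))) w₀ := by
  classical
  have hα : IsExec t A ⊤ (runE A ∅ u ∅ ∅) := isExec_alpha A t u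
  have hfin : (fullSet A G u k).Finite := by
    have hMC : {m : Message n | ∃ i, i ∉ (runE A ∅ u ∅ ∅).faulty ∧
        ∃ j, 1 ≤ j ∧ m ∈ (runE A ∅ u ∅ ∅).sent i j}.Finite :=
      Set.encard_lt_top_iff.1 (lt_of_lt_of_le (H _ hα) le_top)
    apply hMC.subset
    rintro m hm
    obtain ⟨h1, h2, h3⟩ := (mem_fullSet A).1 hm
    refine ⟨m.sender, Set.notMem_empty m.sender, k + 1, by omega, ?_⟩
    exact ⟨h3, Set.notMem_empty m⟩
  have chain : ∀ S : Finset (Message n), ↑S ⊆ fullSet A G u k →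
      Dval A (XE A G u (k+1) (↑S : Set (Message n))) w₀
        = Dval A (XE A G u (k+1) (∅ : Set (Message n))) w₀ := by
    intro S
    induction S using Finset.induction_on with
    | empty => intro _; rw [Finset.coe_empty]
    | @insert mq S hmqS ih =>
        intro hsub
        have hmqfull : mq ∈ fullSet A G u k := hsub (by simp)
        obtain ⟨hmqG, hmqr, hmqs⟩ := (mem_fullSet A).1 hmqfull
        have hSsub : (↑S : Set (Message n)) ⊆ fullSet A G u k := by
          refine subset_trans ?_ hsub
          rw [Finset.coe_insert]
          exact Set.subset_insert _ _
        have hstep : Dval A (XE A G u (k+1) (↑(insert mq S) : Set (Message n))) w₀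
            = Dval A (XE A G u (k+1) (↑S : Set (Message n))) w₀ := by
          apply D_eq A t aa hta ha htn hA H G hGcard w₀ hw₀ u u (k+1) (k+1) _ _ ?_ ?_
            (G.erase mq.receiver) (Finset.erase_subset _ _) ?_ ?_
          · intro m hm
            rcases Finset.mem_coe.1 hm |> Finset.mem_insert.1 with h | h
            · rw [h]
              exact ⟨hmqG, by omega⟩
            · obtain ⟨a1, a2, -⟩ := (mem_fullSet A).1 (hSsub (Finset.mem_coe.2 h))
              exact ⟨a1, by omega⟩
          · intro m hm
            obtain ⟨a1, a2, -⟩ := (mem_fullSet A).1 (hSsub hm)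
            exact ⟨a1, by omega⟩
          · rw [Finset.card_erase_of_mem hmqG, hGcard]
          · intro g hg j
            rw [Finset.coe_insert]
            exact states_step A G u k (↑S) (fun m hm => ((mem_fullSet A).1 (hSsub hm)).2.1)
              mq hmqr g (Finset.mem_of_mem_erase hg) (Finset.ne_of_mem_erase hg) j
        rw [hstep, ih hSsub]
  have h1 : Dval A (XE A G u (k+1) (fullSet A G u k)) w₀
      = Dval A (XE A G u (k+1) (∅ : Set (Message n))) w₀ := by
    have := chain hfin.toFinset (by rw [Set.Finite.coe_toFinset])
    rwa [Set.Finite.coe_toFinset] at this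
  have h2 : Dval A (XE A G u (k+1) (fullSet A G u k)) w₀
      = Dval A (XE A G u k (∅ : Set (Message n))) w₀ := by
    apply Dval_congr
    intro j
    show (runS A u ∅ (BlockX G (k+1) (fullSet A G u k)) (j-1) w₀).1
      = (runS A u ∅ (BlockX G k ∅) (j-1) w₀).1
    rw [shift_eq A G u k]
  rw [← h1, h2]

/-- Cutting at any round gives the same outside decision as cutting from the
very beginning. -/
lemma D_all (t aa : ℕ) (hta : t = 8 * aa) (ha : 1 ≤ aa) (htn : t < n)
    (hA : SolvesWeakConsensus t A)
    (H : ∀ E : Exec A, IsExec t A ⊤ E → msgCount E < ((2 * aa ^ 2 : ℕ) : ℕ∞))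
    (G : Finset (Fin n)) (hGcard : G.card = 2 * aa)
    (w₀ : Fin n) (hw₀ : w₀ ∉ G)
    (u : Fin n → Bool) (k : ℕ) :
    Dval A (XE A G u k (∅ : Set (Message n))) w₀
      = Dval A (XE A G u 0 (∅ : Set (Message n))) w₀ := by
  induction k with
  | zero => rfl
  | succ k ih => rw [D_succ A t aa hta ha htn hA H G hGcard w₀ hw₀ u k, ih]

/-- Cutting after everyone has decided does not change the decision. -/
lemma D_late (t aa : ℕ) (hta : t = 8 * aa) (ha : 1 ≤ aa)
    (hA : SolvesWeakConsensus t A)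
    (G : Finset (Fin n)) (hGcard : G.card = 2 * aa)
    (w₀ : Fin n) (hw₀ : w₀ ∉ G)
    (u : Fin n → Bool) :
    ∃ K, Dval A (XE A G u K (∅ : Set (Message n))) w₀
      = Dval A (runE A ∅ u ∅ ∅) w₀ := by
  have hα : IsExec t A ⊤ (runE A ∅ u ∅ ∅) := isExec_alpha A t u
  obtain ⟨b, hb⟩ := (hA _ hα).1 w₀ (Set.notMem_empty w₀)
  obtain ⟨r, hr, hdecr⟩ := hb
  have hGle : (G.card : ℕ∞) ≤ (t : ℕ∞) := by
    rw [hGcard, hta]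
    exact_mod_cast by omega
  have hEX : IsExec t A ⊤ (XE A G u r (∅ : Set (Message n))) :=
    isExec_XE A t G u r ∅ hGle (fun m hm => absurd hm (Set.notMem_empty m))
  have hr1 : 1 ≤ r := hr.1
  have hpre : (runS A u ∅ (BlockX G r ∅) (r-1) w₀).1 = (runS A u ∅ ∅ (r-1) w₀).1 := by
    have := prefix_eq A G u (r-1) ∅ (fun m hm => absurd hm (Set.notMem_empty m))
      (r-1) (le_refl _) w₀
    rw [show r - 1 + 1 = r from by omega] at this
    rw [this]
  have hdecX : Decides ⊤ (XE A G u r (∅ : Set (Message n))) w₀ b := by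
    refine ⟨r, hr, ?_⟩
    show A.dec (runS A u ∅ (BlockX G r ∅) (r-1) w₀).1 = some b
    rw [hpre]
    exact hdecr
  refine ⟨r, ?_⟩
  rw [Dval_eq A hEX hdecX, Dval_eq A hα ⟨r, hr, hdecr⟩]

/-- When `G` is cut off from the start, a member's run only depends on its own
proposal. -/
lemma states_solo (G : Finset (Fin n)) (u u' : Fin n → Bool) (g : Fin n) (hg : g ∈ G)
    (huu' : u g = u' g) :
    ∀ j, runS A u ∅ (BlockX G 0 (∅ : Set (Message n))) j g
      = runS A u' ∅ (BlockX G 0 (∅ : Set (Message n))) j g := by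
  intro j
  have key := runS_eq A u u' ∅ ∅ (BlockX G 0 ∅) (BlockX G 0 ∅)
    (fun _ => {g}) ?_ ?_ ?_ ?_
  · exact key j g rfl
  · intro _; exact subset_refl _
  · intro i hi
    have : i = g := hi
    rw [this]
    exact huu'
  · intro j i hi m hrecv hround hs _
    have hig : i = g := hi
    have hsg : m.sender = g := hs
    exact absurd (by rw [hsg, ← hig, hrecv] : m.sender = m.receiver) m.ne
  · intro j i hi m hrecv hround _
    have hig : i = g := hi
    constructor <;> intro _ <;>
      exact Or.inr (Or.inl ⟨by rw [hrecv, hig]; exact hg, by omega⟩)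

lemma bool_chain (f : ℕ → Bool) (N : ℕ) (h : f 0 ≠ f N) : ∃ m, m < N ∧ f m ≠ f (m + 1) := by
  induction N with
  | zero => exact absurd rfl h
  | succ N ih =>
      by_cases hN : f N = f (N + 1)
      · obtain ⟨m, hm, hne⟩ := ih (by rw [hN]; exact h)
        exact ⟨m, by omega, hne⟩
      · exact ⟨N, by omega, hN⟩

end WCLB

/-- Every deterministic algorithm solving weak consensus in
the omission model (among `n` processes, tolerating up to `t` omission-faulty
processes, with `8 ≤ t < n` and `8 ∣ t`) has message complexity at least
`t² / 32`. -/
theorem weak_consensus_message_lower_bound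
    (n t : ℕ) (ht8 : 8 ≤ t) (htn : t < n) (hdvd : 8 ∣ t)
    (A : Algorithm n Bool Bool) (hA : SolvesWeakConsensus t A) :
    ((t ^ 2 / 32 : ℕ) : ℕ∞) ≤ MsgComplexity t A := by
  classical
  by_contra hcon
  push_neg at hcon
  have H0 : ∀ E : Exec A, IsExec t A ⊤ E → msgCount E < ((t ^ 2 / 32 : ℕ) : ℕ∞) := by
    intro E hE
    refine lt_of_le_of_lt ?_ hcon
    exact le_iSup (fun E : {E : Exec A // IsExec t A ⊤ E} => msgCount E.1) ⟨E, hE⟩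
  obtain ⟨aa, hta⟩ := hdvd
  have ha : 1 ≤ aa := by omega
  have hQ : t ^ 2 / 32 = 2 * aa ^ 2 := by
    rw [hta, show (8 * aa) ^ 2 = 32 * (2 * aa ^ 2) from by ring]
    exact Nat.mul_div_cancel_left _ (by norm_num)
  rw [hQ] at H0
  have hn0 : 0 < n := by omega
  set z : Fin n := ⟨0, hn0⟩ with hz
  set vp : ℕ → Fin n → Bool := fun m i => decide ((i : ℕ) < m) with hvp
  set f : ℕ → Bool := fun m => WCLB.Dval A (WCLB.runE A ∅ (vp m) ∅ ∅) z with hf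
  have hα : ∀ u, IsExec t A ⊤ (WCLB.runE A ∅ u ∅ ∅) := fun u => WCLB.isExec_alpha A t u
  -- Weak validity pins the failure-free decisions on unanimous proposals
  have hconstdec : ∀ (b : Bool) (u : Fin n → Bool), (∀ i, u i = b) → ∀ i : Fin n,
      WCLB.Dval A (WCLB.runE A ∅ u ∅ ∅) i = b := by
    intro b u hu i
    obtain ⟨c, hc⟩ := (hA _ (hα u)).1 i (Set.notMem_empty i)
    have hprop : ∀ i', Proposes (WCLB.runE A ∅ u ∅ ∅) i' b := by
      intro i'
      show A.prop (A.init i' (u i')) = b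
      rw [A.init_prop, hu]
    have hnodec := (hA _ (hα u)).2.2 rfl b hprop i
    have hcb : c = b := by
      by_contra hne
      apply hnodec
      have hcb' : c = !b := by cases b <;> cases c <;> simp_all
      rwa [hcb'] at hc
    rw [WCLB.Dval_eq A (hα u) hc, hcb]
  have hf0 : f 0 = false := hconstdec false (vp 0) (fun i => by simp [hvp]) z
  have hfn : f n = true := hconstdec true (vp n) (fun i => by simp [hvp, Fin.is_lt]) z
  obtain ⟨m, hmn, hne⟩ := WCLB.bool_chain f n (by rw [hf0, hfn]; simp)
  set p : Fin n := ⟨m, hmn⟩ with hp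
  obtain ⟨G, hGsub, hGcard⟩ := Finset.exists_subset_card_eq
    (show 2 * aa ≤ (Finset.univ.erase p).card from by
      rw [Finset.card_erase_of_mem (Finset.mem_univ p), Finset.card_univ, Fintype.card_fin]
      omega)
  have hpG : p ∉ G := fun h => Finset.notMem_erase p _ (hGsub h)
  obtain ⟨w₀, hw₀'⟩ := WCLB.exists_not_mem_of_encard_lt (S := (↑G : Set (Fin n))) (by
    rw [Set.encard_coe_eq_coe_finsetCard, hGcard, Nat.cast_lt]
    omega)
  have hw₀ : w₀ ∉ G := fun h => hw₀' (Finset.mem_coe.2 h)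
  have hzw : ∀ u, WCLB.Dval A (WCLB.runE A ∅ u ∅ ∅) w₀
      = WCLB.Dval A (WCLB.runE A ∅ u ∅ ∅) z := by
    intro u
    obtain ⟨bw, hbw⟩ := (hA _ (hα u)).1 w₀ (Set.notMem_empty w₀)
    obtain ⟨bz, hbz⟩ := (hA _ (hα u)).1 z (Set.notMem_empty z)
    rw [WCLB.Dval_eq A (hα u) hbw, WCLB.Dval_eq A (hα u) hbz,
      (hA _ (hα u)).2.1 w₀ z bw bz (Set.notMem_empty w₀) (Set.notMem_empty z) hbw hbz]
  have hchain : ∀ u, WCLB.Dval A (WCLB.runE A ∅ u ∅ ∅) w₀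
      = WCLB.Dval A (WCLB.XE A G u 0 (∅ : Set (Message n))) w₀ := by
    intro u
    obtain ⟨K, hK⟩ := WCLB.D_late A t aa hta ha hA G hGcard w₀ hw₀ u
    rw [← hK, WCLB.D_all A t aa hta ha htn hA H0 G hGcard w₀ hw₀ u K]
  have hsolo : WCLB.Dval A (WCLB.XE A G (vp m) 0 (∅ : Set (Message n))) w₀
      = WCLB.Dval A (WCLB.XE A G (vp (m+1)) 0 (∅ : Set (Message n))) w₀ := by
    apply WCLB.D_eq A t aa hta ha htn hA H0 G hGcard w₀ hw₀ (vp m) (vp (m+1)) 0 0 ∅ ∅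
      (fun m' hm' => absurd hm' (Set.notMem_empty m'))
      (fun m' hm' => absurd hm' (Set.notMem_empty m'))
      G (subset_refl G) (by omega)
    intro g hg j
    apply WCLB.states_solo A G (vp m) (vp (m+1)) g hg
    have hgp : g ≠ p := fun h => hpG (h ▸ hg)
    have hgm : (g : ℕ) ≠ m := fun h => hgp (Fin.ext h)
    show decide ((g : ℕ) < m) = decide ((g : ℕ) < m + 1)
    simp only [decide_eq_decide]
    omega
  have hfinal : f m = f (m + 1) := by
    rw [hf]
    simp only
    rw [← hzw (vp m), ← hzw (vp (m+1)), hchain (vp m), hchain (vp (m+1)), hsolo]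
  exact hne hfinal
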